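/- Let G be a claw-free graph and let T be a spanning tree of G rooted at a vertex r with the DFS property, i.e., for every edge (u,v) of G, one of u and v is an ancestor of the other in T (with respect to the root r). Then every vertex of G is adjacent in G to at most two leaves of T, where a leaf of T is a vertex with no children in T. -/

import Mathlib

/-- A graph is claw-free if it has no induced `K_{1,3}`: among any three distinct neighbors
of a vertex, some two are adjacent. -/
def ClawFree {V : Type*} (G : SimpleGraph V) : Prop :=
  ∀ v a b c : V, G.Adj v a → G.Adj v b → G.Adj v c → a ≠ b → a ≠ c → b ≠ c →
    G.Adj a b ∨ G.Adj a c ∨ G.Adj b c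

/-- In a tree `T` rooted at `r`, vertex `u` is an ancestor of `v` if `u` lies on every
path in `T` from `r` to `v` (in a tree there is a unique such path). -/
def IsAncestor {V : Type*} (T : SimpleGraph V) (r u v : V) : Prop :=
  ∀ p : T.Path r v, u ∈ p.val.support

/-- A leaf of the tree `T` rooted at `r` is a vertex with no children, i.e. it is not an
ancestor of any of its neighbors. -/
def IsLeaf {V : Type*} (T : SimpleGraph V) (r v : V) : Prop :=
  ∀ c : V, T.Adj v c → ¬ IsAncestor T r v c

/-- A leaf is not a (weak) ancestor of any other vertex. -/
lemma leaf_not_ancestor' {V : Type*} [DecidableEq V] (T : SimpleGraph V) (htree : T.IsTree)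
    (r a b : V)
    (hleaf : ∀ c : V, T.Adj a c → ¬ (∀ p : T.Path r c, a ∈ p.val.support))
    (hab : a ≠ b) (hanc : ∀ p : T.Path r b, a ∈ p.val.support) : False := by
  obtain ⟨w, hw, -⟩ := htree.existsUnique_path r b
  have ha : a ∈ w.support := hanc ⟨w, hw⟩
  have hspec := w.take_spec ha
  obtain ⟨c, hac, d', hd'⟩ := SimpleGraph.Walk.exists_eq_cons_of_ne hab (w.dropUntil a ha)
  set q := w.takeUntil a ha with hq
  have hqpath : q.IsPath := hw.takeUntil ha
  have hnodup : (q.support ++ (w.dropUntil a ha).support.tail).Nodup := by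
    have := hw.support_nodup
    rwa [← hspec, SimpleGraph.Walk.support_append] at this
  have hc_notin : c ∉ q.support := by
    intro hc
    have hc2 : c ∈ (w.dropUntil a ha).support.tail := by
      rw [hd']
      simp [SimpleGraph.Walk.support_cons]
    exact (List.disjoint_of_nodup_append hnodup) hc hc2
  have hP : (q.concat hac).IsPath := by
    rw [SimpleGraph.Walk.isPath_def, SimpleGraph.Walk.support_concat,
      List.nodup_append]
    exact ⟨hqpath.support_nodup, List.nodup_singleton c,
      fun x hx y hy hxy => hc_notin (by simp at hy; subst hy; exact hxy ▸ hx)⟩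
  refine hleaf c hac ?_
  intro p
  have : p = ⟨q.concat hac, hP⟩ := htree.IsAcyclic.path_unique p ⟨q.concat hac, hP⟩
  rw [this]
  show a ∈ (q.concat hac).support
  rw [SimpleGraph.Walk.support_concat]
  simp [SimpleGraph.Walk.end_mem_support q]

/-- If `G` is claw-free and `T` is a spanning tree of `G` rooted at `r` with the DFS
property (for every edge of `G`, one endpoint is an ancestor of the other), then every
vertex of `G` is adjacent in `G` to at most two leaves of `T`. -/
theorem clawfree_dfs_tree_two_leaves
    {V : Type*} [Fintype V] (G : SimpleGraph V) (hcf : ClawFree G)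
    (T : SimpleGraph V) (hle : T ≤ G) (htree : T.IsTree) (r : V)
    (hdfs : ∀ u v : V, G.Adj u v → IsAncestor T r u v ∨ IsAncestor T r v u) :
    ∀ v : V, {l : V | IsLeaf T r l ∧ G.Adj v l}.ncard ≤ 2 := by
  classical
  intro v
  by_contra hlt
  push_neg at hlt
  rw [Set.two_lt_ncard (Set.toFinite _)] at hlt
  obtain ⟨a, ⟨hal, hav⟩, b, ⟨hbl, hbv⟩, c, ⟨hcl, hcv⟩, hab, hac, hbc⟩ := hlt
  have key : ∀ x y : V, IsLeaf T r x → IsLeaf T r y → G.Adj x y → x ≠ y → False := by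
    intro x y hx hy hxy hne
    rcases hdfs x y hxy with h | h
    · exact leaf_not_ancestor' T htree r x y hx hne h
    · exact leaf_not_ancestor' T htree r y x hy hne.symm h
  rcases hcf v a b c hav hbv hcv hab hac hbc with h | h | h
  · exact key a b hal hbl h hab
  · exact key a c hal hcl h hac
  · exact key b c hbl hcl h hbc
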